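/- If ω is an undominated end of G, then every finite set Y ⊆ V can be separated from ω by a finite set of vertices disjoint from Y. -/

import Mathlib

open Set

universe u

/-- A separation of a graph `G`: a pair of vertex sets covering `V` with no
edge between `A \ B` and `B \ A`. -/
structure Separation {V : Type u} (G : SimpleGraph V) where
  A : Set V
  B : Set V
  union_eq : A ∪ B = Set.univ
  no_edge : ∀ a ∈ A \ B, ∀ b ∈ B \ A, ¬ G.Adj a b

/-- The oriented separations of finite order. -/
abbrev FinSep {V : Type u} (G : SimpleGraph V) := {s : Separation G // (s.A ∩ s.B).Finite}

/-- The separation topology: basic open sets prescribe the restriction of a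
separation to a finite vertex set `Z`. -/
instance sepTop {V : Type u} (G : SimpleGraph V) : TopologicalSpace (FinSep G) :=
  TopologicalSpace.generateFrom
    {O | ∃ Z AZ BZ : Set V, Z.Finite ∧
      O = {s : FinSep G | s.1.A ∩ Z = AZ ∧ s.1.B ∩ Z = BZ}}

/-- The reverse orientation of a finite-order separation. -/
def FinSep.rev {V : Type u} {G : SimpleGraph V} (s : FinSep G) : FinSep G :=
  ⟨⟨s.1.B, s.1.A, by rw [Set.union_comm]; exact s.1.union_eq,
    fun a ha b hb h => s.1.no_edge b hb a ha h.symm⟩,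
   by rw [Set.inter_comm]; exact s.2⟩

/-- A ray in a graph: an injective sequence of successively adjacent vertices. -/
structure GraphRay {V : Type u} (G : SimpleGraph V) where
  f : ℕ → V
  inj : Function.Injective f
  adj : ∀ n, G.Adj (f n) (f (n + 1))

/-- Two rays are equivalent if no finite vertex set separates them. -/
def RayEquiv {V : Type u} (G : SimpleGraph V) (R R' : GraphRay G) : Prop :=
  ∀ F : Set V, F.Finite →
    ∃ (m n : ℕ) (w : G.Walk (R.f m) (R'.f n)), ∀ x ∈ w.support, x ∉ F

/-- An end of a graph: a (nonempty) equivalence class of rays. -/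
structure GraphEnd {V : Type u} (G : SimpleGraph V) where
  rays : Set (GraphRay G)
  nonempty : rays.Nonempty
  mem_iff : ∀ R ∈ rays, ∀ R', R' ∈ rays ↔ RayEquiv G R R'

/-- A ray has a tail in `B`. -/
def HasTailIn {V : Type u} {G : SimpleGraph V} (R : GraphRay G) (B : Set V) : Prop :=
  ∃ N, ∀ n ≥ N, R.f n ∈ B

/-- The end tangle induced by the end `ω`: all finite-order separations `(A,B)`
such that every ray of `ω` has a tail in `B`. -/
def endTangle {V : Type u} {G : SimpleGraph V} (ω : GraphEnd G) : Set (FinSep G) :=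
  {s | ∀ R ∈ ω.rays, HasTailIn R s.1.B}

/-- `v` dominates the end `ω`: `v` sends infinitely many paths to a ray of `ω`
which pairwise meet only in `v`. -/
def Dominates {V : Type u} (G : SimpleGraph V) (v : V) (ω : GraphEnd G) : Prop :=
  ∃ R ∈ ω.rays, ∃ p : ℕ → (n : ℕ) × G.Walk v (R.f n),
    (∀ i, (p i).2.IsPath) ∧ (Function.Injective fun i => (p i).1) ∧
    ∀ i j, i ≠ j → ∀ x, x ∈ (p i).2.support → x ∈ (p j).2.support → x = v

/-- The end `ω` has (vertex) degree at least `m`: there are `m` pairwise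
disjoint rays belonging to `ω`. -/
def DegGE {V : Type u} (G : SimpleGraph V) (ω : GraphEnd G) (m : ℕ) : Prop :=
  ∃ R : Fin m → GraphRay G, (∀ i, R i ∈ ω.rays) ∧
    ∀ i j, i ≠ j → Disjoint (Set.range (R i).f) (Set.range (R j).f)

/-- At least `n` vertices dominate `ω`. -/
def DomGE {V : Type u} (G : SimpleGraph V) (ω : GraphEnd G) (n : ℕ) : Prop :=
  ∃ D : Finset V, D.card = n ∧ ∀ v ∈ D, Dominates G v ω

/-- `deg(ω) + dom(ω) ≥ k`. -/
def DegDomGE {V : Type u} (G : SimpleGraph V) (ω : GraphEnd G) (k : ℕ) : Prop :=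
  ∃ m n, m + n = k ∧ DegGE G ω m ∧ DomGE G ω n

/-- `T` separates `X` from the end `ω`: every ray of `ω` meeting `X` meets `T`. -/
def SeparatesFromEnd {V : Type u} (G : SimpleGraph V) (X T : Set V) (ω : GraphEnd G) : Prop :=
  ∀ R ∈ ω.rays, (∃ n, R.f n ∈ X) → ∃ n, R.f n ∈ T

/-- `K` is `(<ℵ₀)`-inseparable (apart from the infiniteness requirement): no
finite-order separation separates two of its vertices. -/
def FinInseparable {V : Type u} (G : SimpleGraph V) (K : Set V) : Prop :=
  ∀ s : FinSep G, ∀ x ∈ K, ∀ y ∈ K, ¬(x ∈ s.1.A \ s.1.B ∧ y ∈ s.1.B \ s.1.A)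

/-- An `ℵ₀`-block: a maximal infinite set of vertices no two of which can be
separated by a finite-order separation. -/
def Aleph0Block {V : Type u} (G : SimpleGraph V) (K : Set V) : Prop :=
  K.Infinite ∧ FinInseparable G K ∧
    ∀ K' : Set V, K ⊆ K' → K'.Infinite → FinInseparable G K' → K' = K

namespace Sep11

open SimpleGraph

variable {V : Type u} {G : SimpleGraph V}

/-- Segment of a ray, from index `a` to `a + k`. -/
def raySeg (R : GraphRay G) (a : ℕ) : (k : ℕ) → G.Walk (R.f a) (R.f (a + k))
  | 0 => Walk.nil
  | k + 1 => (raySeg R a k).concat (R.adj (a + k))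

lemma raySeg_support (R : GraphRay G) (a : ℕ) :
    ∀ k, ∀ x ∈ (raySeg R a k).support, x ∈ Set.range R.f
  | 0 => by simp [raySeg]
  | k + 1 => by
    intro x hx
    rw [raySeg, Walk.support_concat, List.mem_append] at hx
    rcases hx with hx | hx
    · exact raySeg_support R a k x hx
    · simp only [List.mem_singleton] at hx
      exact ⟨a + k + 1, hx.symm⟩

/-- Every walk starting in `Y` has a suffix whose only vertex in `Y` is its start. -/
lemma exists_suffix (Y : Set V) {u v : V} (w : G.Walk u v) :
    (∃ y ∈ Y, ∃ w' : G.Walk y v, (∀ x ∈ w'.support, x ∈ w.support) ∧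
      ∀ x ∈ w'.support.tail, x ∉ Y) ∨ ∀ x ∈ w.support, x ∉ Y := by
  induction w with
  | @nil u =>
    by_cases hu : u ∈ Y
    · exact Or.inl ⟨u, hu, Walk.nil, fun x hx => hx, by simp⟩
    · refine Or.inr ?_
      intro x hx
      simp only [Walk.support_nil, List.mem_singleton] at hx
      subst hx; exact hu
  | @cons u uv vv h p ih =>
    rcases ih with ⟨y, hy, w', hsub, htail⟩ | hnone
    · refine Or.inl ⟨y, hy, w', fun x hx => ?_, htail⟩
      rw [Walk.support_cons]
      exact List.mem_cons_of_mem _ (hsub x hx)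
    · by_cases hu : u ∈ Y
      · refine Or.inl ⟨u, hu, Walk.cons h p, fun x hx => hx, ?_⟩
        intro x hx
        rw [Walk.support_cons, List.tail_cons] at hx
        exact hnone x hx
      · refine Or.inr ?_
        intro x hx
        rw [Walk.support_cons, List.mem_cons] at hx
        rcases hx with rfl | hx
        · exact hu
        · exact hnone x hx

/-- A `Y`–`R0` path whose only vertex in `Y` is its start. -/
structure Item {V : Type u} {G : SimpleGraph V} (Y : Set V) (R0 : GraphRay G) where
  y : V
  hy : y ∈ Y
  n : ℕ
  w : G.Walk y (R0.f n)
  path : w.IsPath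
  yonly : ∀ x ∈ w.support, x ∈ Y → x = y

lemma step (ω : GraphEnd G) (Y : Set V) (hY : Y.Finite)
    (hbad : ∀ F : Set V, F.Finite → Disjoint F Y → ¬ SeparatesFromEnd G Y F ω)
    (R0 : GraphRay G) (hR0 : R0 ∈ ω.rays) (hR0Y : ∀ k, R0.f k ∉ Y)
    (N : ℕ) (S : Set V) (hS : S.Finite) :
    ∃ it : Item Y R0, N ≤ it.n ∧ ∀ x ∈ it.w.support, x ∉ S \ Y := by
  classical
  have hFfin : ((S ∪ R0.f '' Set.Iio N) \ Y).Finite :=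
    (hS.union ((Set.finite_Iio N).image _)).diff
  have hFY : Disjoint ((S ∪ R0.f '' Set.Iio N) \ Y) Y := Set.disjoint_sdiff_left
  have hsep := hbad _ hFfin hFY
  unfold SeparatesFromEnd at hsep
  push_neg at hsep
  obtain ⟨R, hR, ⟨a, haY⟩, hRF⟩ := hsep
  have hequiv : RayEquiv G R R0 := (ω.mem_iff R hR R0).mp hR0
  obtain ⟨m, n, w, hw⟩ := hequiv (((S ∪ R0.f '' Set.Iio N) \ Y) ∪ (Y ∪ R.f '' Set.Iic a))
    (hFfin.union (hY.union ((Set.finite_Iic a).image _)))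
  have ham : a ≤ m := by
    by_contra hlt
    exact hw (R.f m) w.start_mem_support (Or.inr (Or.inr ⟨m, Set.mem_Iic.mpr (by omega), rfl⟩))
  have hmm : a + (m - a) = m := by omega
  have hWF : ∀ x ∈ (((raySeg R a (m - a)).copy rfl (congrArg R.f hmm)).append w).support,
      x ∉ (S ∪ R0.f '' Set.Iio N) \ Y := by
    intro x hx
    rw [Walk.support_append, List.mem_append] at hx
    rcases hx with hx | hx
    · rw [Walk.support_copy] at hx
      obtain ⟨k, rfl⟩ := raySeg_support R a (m - a) x hx
      exact hRF k
    · exact fun hxF => hw x (List.mem_of_mem_tail hx) (Or.inl hxF)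
  obtain ⟨y, hy, w', hsub, htail⟩ | hnone :=
    exists_suffix Y (((raySeg R a (m - a)).copy rfl (congrArg R.f hmm)).append w)
  · have hsubp := Walk.support_toPath_subset w'
    refine ⟨⟨y, hy, n, w'.toPath.1, w'.toPath.2, ?_⟩, ?_, ?_⟩
    · intro x hx hxY
      by_contra hne
      have hx' : x ∈ w'.support := hsubp hx
      rw [Walk.support_eq_cons, List.mem_cons] at hx'
      rcases hx' with rfl | hx'
      · exact hne rfl
      · exact htail x hx' hxY
    · by_contra hlt
      push_neg at hlt
      exact hw (R0.f n) w.end_mem_support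
        (Or.inl ⟨Or.inr ⟨n, hlt, rfl⟩, hR0Y n⟩)
    · intro x hx hxS
      exact hWF x (hsub x (hsubp hx)) ⟨Or.inl hxS.1, hxS.2⟩
  · exact absurd haY (hnone (R.f a) (Walk.start_mem_support _))

/-- A context bundling the hypotheses of the contradiction argument. -/
structure Ctx {V : Type u} (G : SimpleGraph V) where
  ω : GraphEnd G
  Y : Set V
  hY : Y.Finite
  hbad : ∀ F : Set V, F.Finite → Disjoint F Y → ¬ SeparatesFromEnd G Y F ω
  R0 : GraphRay G
  hR0 : R0 ∈ ω.rays
  hR0Y : ∀ k, R0.f k ∉ Y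

variable (c : Ctx G)

noncomputable def Ctx.St : ℕ → {q : Set V × ℕ // q.1.Finite}
  | 0 => ⟨(∅, 0), Set.finite_empty⟩
  | j + 1 =>
    ⟨((Ctx.St j).1.1 ∪
        {x | x ∈ (Classical.choose (step c.ω c.Y c.hY c.hbad c.R0 c.hR0 c.hR0Y
          (Ctx.St j).1.2 (Ctx.St j).1.1 (Ctx.St j).2)).w.support},
      (Classical.choose (step c.ω c.Y c.hY c.hbad c.R0 c.hR0 c.hR0Y
          (Ctx.St j).1.2 (Ctx.St j).1.1 (Ctx.St j).2)).n + 1),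
     (Ctx.St j).2.union (List.finite_toSet _)⟩

noncomputable def Ctx.It (j : ℕ) : Item c.Y c.R0 :=
  Classical.choose (step c.ω c.Y c.hY c.hbad c.R0 c.hR0 c.hR0Y
    (Ctx.St c j).1.2 (Ctx.St c j).1.1 (Ctx.St c j).2)

lemma Ctx.It_spec (j : ℕ) :
    (Ctx.St c j).1.2 ≤ (Ctx.It c j).n ∧
      ∀ x ∈ (Ctx.It c j).w.support, x ∉ (Ctx.St c j).1.1 \ c.Y :=
  Classical.choose_spec (step c.ω c.Y c.hY c.hbad c.R0 c.hR0 c.hR0Y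
    (Ctx.St c j).1.2 (Ctx.St c j).1.1 (Ctx.St c j).2)

lemma Ctx.St_succ (j : ℕ) :
    (Ctx.St c (j + 1)).1 =
      ((Ctx.St c j).1.1 ∪ {x | x ∈ (Ctx.It c j).w.support}, (Ctx.It c j).n + 1) :=
  rfl

lemma Ctx.N_mono : Monotone fun j => (Ctx.St c j).1.2 := by
  apply monotone_nat_of_le_succ
  intro j
  have h1 := (Ctx.It_spec c j).1
  have h2 := congrArg Prod.snd (Ctx.St_succ c j)
  simp only at h2
  omega

lemma Ctx.n_lt {i j : ℕ} (hij : i < j) : (Ctx.It c i).n < (Ctx.It c j).n := by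
  have h1 : (Ctx.St c (i + 1)).1.2 = (Ctx.It c i).n + 1 :=
    congrArg Prod.snd (Ctx.St_succ c i)
  have h2 : (Ctx.St c (i + 1)).1.2 ≤ (Ctx.St c j).1.2 := Ctx.N_mono c hij
  have h3 := (Ctx.It_spec c j).1
  omega

lemma Ctx.S_mono : Monotone fun j => (Ctx.St c j).1.1 := by
  apply monotone_nat_of_le_succ
  intro j
  have h := congrArg Prod.fst (Ctx.St_succ c j)
  simp only at h
  rw [h]
  exact Set.subset_union_left

lemma Ctx.supp_subset {i j : ℕ} (hij : i < j) :
    ∀ x ∈ (Ctx.It c i).w.support, x ∈ (Ctx.St c j).1.1 := by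
  intro x hx
  have h : (Ctx.St c (i + 1)).1.1 ⊆ (Ctx.St c j).1.1 := Ctx.S_mono c hij
  apply h
  have heq := congrArg Prod.fst (Ctx.St_succ c i)
  simp only at heq
  rw [heq]
  exact Or.inr hx

lemma Ctx.meet_in_Y {i j : ℕ} (hij : i < j) :
    ∀ x, x ∈ (Ctx.It c j).w.support → x ∈ (Ctx.It c i).w.support → x ∈ c.Y := by
  intro x hxj hxi
  by_contra hxY
  exact (Ctx.It_spec c j).2 x hxj ⟨Ctx.supp_subset c hij x hxi, hxY⟩

lemma Ctx.contra (hundom : ∀ v : V, ¬ Dominates G v c.ω) : False := by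
  haveI := c.hY.to_subtype
  obtain ⟨⟨y, hyY⟩, hinf⟩ :=
    Finite.exists_infinite_fiber (fun j => (⟨(Ctx.It c j).y, (Ctx.It c j).hy⟩ : c.Y))
  have hTinf : {j | (Ctx.It c j).y = y}.Infinite := by
    rw [← Set.infinite_coe_iff]
    have hset : (fun j => (⟨(Ctx.It c j).y, (Ctx.It c j).hy⟩ : c.Y)) ⁻¹' {⟨y, hyY⟩}
        = {j | (Ctx.It c j).y = y} := by
      ext j
      simp [Subtype.ext_iff]
    rw [← hset]
    exact hinf
  set e := hTinf.natEmbedding with he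
  apply hundom y
  refine ⟨c.R0, c.hR0,
    fun i => ⟨(Ctx.It c (e i).1).n, ((Ctx.It c (e i).1).w).copy (e i).2 rfl⟩, ?_, ?_, ?_⟩
  · intro i
    exact (Walk.isPath_copy _ (e i).2 rfl).mpr (Ctx.It c (e i).1).path
  · intro i j hij
    have hij' : (Ctx.It c (e i).1).n = (Ctx.It c (e j).1).n := hij
    by_contra hne
    have hne' : (e i).1 ≠ (e j).1 := fun hh => hne (e.injective (Subtype.ext hh))
    rcases lt_or_gt_of_ne hne' with h | h
    · exact absurd hij' (Nat.ne_of_lt (Ctx.n_lt c h))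
    · exact absurd hij'.symm (Nat.ne_of_lt (Ctx.n_lt c h))
  · intro i j hij x hxi0 hxj0
    have hxi' : x ∈ ((Ctx.It c (e i).1).w.copy (e i).2 rfl).support := hxi0
    have hxj' : x ∈ ((Ctx.It c (e j).1).w.copy (e j).2 rfl).support := hxj0
    rw [Walk.support_copy] at hxi' hxj'
    have hne' : (e i).1 ≠ (e j).1 := fun hh => hij (e.injective (Subtype.ext hh))
    rcases lt_or_gt_of_ne hne' with h | h
    · have hxY := Ctx.meet_in_Y c h x hxj' hxi'
      have := (Ctx.It c (e j).1).yonly x hxj' hxY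
      rw [this]
      exact (e j).2
    · have hxY := Ctx.meet_in_Y c h x hxi' hxj'
      have := (Ctx.It c (e i).1).yonly x hxi' hxY
      rw [this]
      exact (e i).2

end Sep11


/-- a finite set can be separated from an undominated end by a
finite set of vertices disjoint from it. -/
theorem separate_from_undominated {V : Type u} (G : SimpleGraph V) (ω : GraphEnd G)
    (hundom : ∀ v : V, ¬ Dominates G v ω) (Y : Set V) (hY : Y.Finite) :
    ∃ F : Set V, F.Finite ∧ Disjoint F Y ∧ SeparatesFromEnd G Y F ω := by
  by_contra h0
  push_neg at h0
  obtain ⟨Rs, hRs⟩ := ω.nonempty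
  have hpre : (Rs.f ⁻¹' Y).Finite := hY.preimage (Set.injOn_of_injective Rs.inj)
  obtain ⟨M, hM⟩ := hpre.bddAbove
  set R0 : GraphRay G := ⟨fun k => Rs.f (M + 1 + k),
    fun i j h => by have := Rs.inj h; omega,
    fun k => Rs.adj (M + 1 + k)⟩ with hR0def
  have hR0Y : ∀ k, R0.f k ∉ Y := by
    intro k hk
    have h1 : M + 1 + k ∈ Rs.f ⁻¹' Y := hk
    have h2 := hM h1
    omega
  have hR0 : R0 ∈ ω.rays := by
    rw [ω.mem_iff Rs hRs R0]
    intro F hF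
    have hpf : (R0.f ⁻¹' F).Finite := hF.preimage (Set.injOn_of_injective R0.inj)
    obtain ⟨B, hB⟩ := hpf.bddAbove
    refine ⟨M + 1 + (B + 1), B + 1, SimpleGraph.Walk.nil, ?_⟩
    intro x hx
    simp only [SimpleGraph.Walk.support_nil, List.mem_singleton] at hx
    subst hx
    intro hxF
    have h1 : B + 1 ∈ R0.f ⁻¹' F := hxF
    have h2 := hB h1
    omega
  exact Sep11.Ctx.contra ⟨ω, Y, hY, h0, R0, hR0, hR0Y⟩ hundom
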